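/- Let p > 1 be an integer, n ≥ 7 an odd integer, and q an integer with 2 ≤ q < (n-1)/2. Set r = ⌊(q-1)(n-2)/q⌋ and ε = (q-1)(n-2) - q·r. Then (n-q)^p + (n-r-2)(q+1)^p + (q+1-ε)^p + r < (n-1)^p + (n-1)·2^p. -/
import Mathlib

open Finset

private lemma key_ind (A T : ℝ) (hT : 3 ≤ T) (hA : 2 * T ≤ A) :
    ∀ p : ℕ, 2 ≤ p →
      (A - T + 2) ^ p + A + (∑ i ∈ range p, T ^ i) * (A + T - 2) < A ^ p + A * 2 ^ p := by
  have hB : 2 ≤ A - T + 2 := by linarith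
  have hB2 : 4 * A ≤ (A - T + 2) ^ 2 := by
    nlinarith [mul_nonneg (by linarith : (0:ℝ) ≤ A / 2 - T + 2) (by linarith : (0:ℝ) ≤ 3 * A / 2 - T + 2), sq_nonneg (A / 2 - 2)]
  intro p hp
  induction p, hp using Nat.le_induction with
  | base =>
      have hS2 : ∑ i ∈ range 2, T ^ i = 1 + T := by
        rw [Finset.sum_range_succ, Finset.sum_range_one]; ring
      rw [hS2]
      nlinarith [mul_pos (by linarith : (0:ℝ) < T - 2) (by linarith : (0:ℝ) < A - 2 * T + 1)]
  | succ p hp ih =>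
      set B : ℝ := A - T + 2 with hBdef
      set S : ℝ := ∑ i ∈ range p, T ^ i with hSdef
      rw [geom_sum_succ, ← hSdef]
      have hBpos : (0:ℝ) ≤ B := by linarith
      have hApos : (0:ℝ) ≤ A := by linarith
      have hBA : B ≤ A := by linarith
      have hABp : B ^ p ≤ A ^ p := pow_le_pow_left₀ hBpos hBA p
      have hBp : A * 2 ^ p ≤ B ^ p := by
        obtain ⟨k, hk⟩ : ∃ k, p = k + 2 := ⟨p - 2, by omega⟩
        subst hk
        have h2k : (2:ℝ) ^ k ≤ B ^ k := pow_le_pow_left₀ (by norm_num) hB k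
        have h2knn : (0:ℝ) ≤ (2:ℝ) ^ k := by positivity
        calc A * 2 ^ (k + 2) = (4 * A) * 2 ^ k := by ring
          _ ≤ B ^ 2 * B ^ k := by
              apply mul_le_mul hB2 h2k h2knn (by positivity)
          _ = B ^ (k + 2) := by ring
      have hTpos : (0:ℝ) < T := by linarith
      have ih' : T * (S * (A + T - 2)) < T * (A ^ p + A * 2 ^ p - B ^ p - A) := by
        apply mul_lt_mul_of_pos_left _ hTpos
        linarith
      have h1 : 0 ≤ (A - T) * (A ^ p - B ^ p) := by
        apply mul_nonneg (by linarith) (by linarith)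
      have h2 : 0 ≤ (T - 2) * (B ^ p - A * 2 ^ p) := by
        apply mul_nonneg (by linarith) (by linarith)
      have h3 : 0 ≤ (T - 2) * (A - 1) := by
        apply mul_nonneg (by linarith) (by linarith)
      have e1 : B ^ (p + 1) = B ^ p * B := by ring
      have e2 : A ^ (p + 1) = A ^ p * A := by ring
      have e3 : (2:ℝ) ^ (p + 1) = 2 ^ p * 2 := by ring
      have e4 : B ^ p * B = B ^ p * A - B ^ p * T + 2 * B ^ p := by
        rw [hBdef]; ring
      rw [e1, e2, e3, e4]
      nlinarith [ih', h1, h2, h3]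

theorem lambda3_lt_lambda1 (p n q : ℕ) (hp : 1 < p) (hn : 7 ≤ n) (hodd : Odd n)
    (hq2 : 2 ≤ q) (hq : 2 * q < n - 1)
    (r ε : ℕ) (hr : r = (q - 1) * (n - 2) / q) (hε : ε = (q - 1) * (n - 2) - q * r) :
    ((n : ℝ) - q) ^ p + ((n : ℝ) - r - 2) * ((q : ℝ) + 1) ^ p +
        ((q : ℝ) + 1 - ε) ^ p + (r : ℝ) <
      ((n : ℝ) - 1) ^ p + ((n : ℝ) - 1) * 2 ^ p := by
  -- natural number facts
  have hq0 : 0 < q := by omega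
  have hkey : q * r + (q - 1) * (n - 2) % q = (q - 1) * (n - 2) := by
    rw [hr]; exact Nat.div_add_mod _ _
  have hmod : (q - 1) * (n - 2) % q < q := Nat.mod_lt _ hq0
  have hqr_le : q * r ≤ (q - 1) * (n - 2) := Nat.le.intro hkey
  have hε' : ε = (q - 1) * (n - 2) % q := by
    rw [hε]; omega
  have hεq : ε < q := hε' ▸ hmod
  have h1 : q * r + ε = (q - 1) * (n - 2) := by rw [hε']; exact hkey
  have h2q : 2 * q + 3 ≤ n := by
    obtain ⟨k, hk⟩ := hodd; omega
  have hrn : r + 3 ≤ n := by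
    have : (q - 1) * (n - 2) / q < n - 2 := by
      apply Nat.div_lt_of_lt_mul
      apply Nat.mul_lt_mul_of_lt_of_le (by omega) (le_refl _) (by omega)
    omega
  have e : (q - 1) * (n - 2) + (2 * q + n) = q * n + 2 := by
    zify [show 1 ≤ q by omega, show 2 ≤ n by omega]; ring
  rw [← h1] at e
  -- real versions
  have hq2R : (2:ℝ) ≤ (q:ℝ) := by exact_mod_cast hq2
  have hnR : (7:ℝ) ≤ (n:ℝ) := by exact_mod_cast hn
  have h2qR : 2 * (q:ℝ) + 3 ≤ (n:ℝ) := by exact_mod_cast h2q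
  have hεR : (ε:ℝ) + 1 ≤ (q:ℝ) := by exact_mod_cast hεq
  have hε0 : (0:ℝ) ≤ (ε:ℝ) := by positivity
  have hrR : (r:ℝ) + 3 ≤ (n:ℝ) := by exact_mod_cast hrn
  have hidR : (q:ℝ) * r + ε + (2 * q + n) = q * n + 2 := by exact_mod_cast e
  set S : ℝ := ∑ i ∈ range p, ((q:ℝ) + 1) ^ i with hSdef
  have hchord : ∀ x : ℝ, 1 ≤ x → x ≤ (q:ℝ) + 1 → x ^ p ≤ 1 + (x - 1) * S := by
    intro x h1x h2x
    have hg : (∑ i ∈ range p, x ^ i) * (x - 1) = x ^ p - 1 := geom_sum_mul x p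
    have hle : ∑ i ∈ range p, x ^ i ≤ S := by
      apply Finset.sum_le_sum
      intro i _
      exact pow_le_pow_left₀ (by linarith) h2x i
    nlinarith [mul_nonneg (sub_nonneg.2 hle) (sub_nonneg.2 h1x)]
  have hTp : ((q:ℝ) + 1) ^ p = 1 + (q:ℝ) * S := by
    have := geom_sum_mul ((q:ℝ) + 1) p
    rw [← hSdef] at this
    nlinarith [this]
  have hεp : ((q:ℝ) + 1 - ε) ^ p ≤ 1 + ((q:ℝ) - ε) * S := by
    have h := hchord ((q:ℝ) + 1 - ε) (by linarith) (by linarith)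
    have : ((q:ℝ) + 1 - ε) - 1 = (q:ℝ) - ε := by ring
    rwa [this] at h
  have hmid := key_ind ((n:ℝ) - 1) ((q:ℝ) + 1) (by linarith) (by linarith) p (by omega)
  rw [← hSdef] at hmid
  have hBn : ((n:ℝ) - 1) - ((q:ℝ) + 1) + 2 = (n:ℝ) - q := by ring
  rw [hBn] at hmid
  have hcoef : ((n:ℝ) - r - 2) * (1 + (q:ℝ) * S) + (1 + ((q:ℝ) - ε) * S) + r =
      ((n:ℝ) - 1) + S * (((n:ℝ) - 1) + ((q:ℝ) + 1) - 2) := by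
    linear_combination (-S) * hidR
  rw [hTp]
  linarith [hεp, hmid, hcoef]
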